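/- With the safe previous operator pre^i as defined, for any Boolean stream e with indicator stream C_e(j) = if e(j) then 1 else 0, and any naturals r_s ≤ r_e, the stream Σ_{r_s ≤ i ≤ r_e} pre^i(C_e) at position j equals the number of positions k with j - r_e ≤ k ≤ j - r_s (and k ≥ 0) at which e(k) is true. Hence the Lustre encoding correctly computes the C-RASP windowed count #_{r_s,r_e}(e). -/

import Mathlib

/-- The safe `i`-fold previous operator. -/
def preN : ℕ → (ℕ → ℤ) → (ℕ → ℤ)
  | 0, s => s
  | i + 1, s => fun j => if j = 0 then 0 else preN i s (j - 1)

lemma preN_eq (i : ℕ) (s : ℕ → ℤ) (j : ℕ) :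
    preN i s j = if i ≤ j then s (j - i) else 0 := by
  induction i generalizing j with
  | zero => simp [preN]
  | succ i ih =>
    cases j with
    | zero => simp [preN]
    | succ j =>
      simp [preN, ih, Nat.succ_le_succ_iff, Nat.succ_sub_succ]

/-- Correctness of the Lustre encoding of the windowed count `#_{r_s,r_e}(e)`:
`Σ_{r_s ≤ i ≤ r_e} pre^i(C_e)` at position `j` equals the number of valid positions `k`
with `j - r_e ≤ k ≤ j - r_s` where `e k` is true (here `k ≤ j - r_s` is expressed as
`k + r_s ≤ j`, and truncated subtraction `j - r_e` accounts for `k ≥ 0`). -/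
theorem windowed_count_correct (e : ℕ → Bool) (rs re j : ℕ) (h : rs ≤ re) :
    (∑ i ∈ Finset.Icc rs re, preN i (fun k => if e k then (1 : ℤ) else 0) j)
      = ((Finset.range (j + 1)).filter
          (fun k => j - re ≤ k ∧ k + rs ≤ j ∧ e k = true)).card := by
  have hsum : (∑ i ∈ Finset.Icc rs re, preN i (fun k => if e k then (1 : ℤ) else 0) j)
      = ((Finset.Icc rs re).filter (fun i => i ≤ j ∧ e (j - i) = true)).card := by
    rw [Finset.card_filter]
    push_cast
    refine Finset.sum_congr rfl fun i _ => ?_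
    rw [preN_eq]
    by_cases h1 : i ≤ j <;> by_cases h2 : e (j - i) = true <;>
      simp [h1, h2]
  rw [hsum]
  congr 1
  apply Finset.card_nbij' (fun i => j - i) (fun k => j - k)
  · intro i hi
    simp only [Finset.mem_coe, Finset.mem_filter, Finset.mem_Icc, Finset.mem_range] at *
    obtain ⟨⟨h1, h2⟩, h3, h4⟩ := hi
    refine ⟨by omega, by omega, by omega, h4⟩
  · intro k hk
    simp only [Finset.mem_coe, Finset.mem_filter, Finset.mem_Icc, Finset.mem_range] at *
    obtain ⟨h1, h2, h3, h4⟩ := hk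
    refine ⟨⟨by omega, by omega⟩, by omega, ?_⟩
    have hk' : j - (j - k) = k := by omega
    rw [hk']; exact h4
  · intro i hi
    simp only [Finset.mem_coe, Finset.mem_filter, Finset.mem_Icc] at hi
    dsimp only
    omega
  · intro k hk
    simp only [Finset.mem_coe, Finset.mem_filter, Finset.mem_range] at hk
    dsimp only
    omega
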